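/- For λ ∈ [c⁻¹,1] let ν_λ be the Borel probability measure on [1,∞) with distribution function ν_λ((−∞,x]) = 1 − x^{−α} M(xλ^{1/α})/M(λ^{1/α}) for x ≥ 1 (and 0 for x < 1). Then the uniform subexponentiality property holds: lim_{x→∞} sup_{λ∈[c⁻¹,1]} | (ν_λ * ν_λ)((x,∞)) / ν_λ((x,∞)) − 2 | = 0, where * denotes convolution of measures. -/

import Mathlib

open Set Filter Topology Real MeasureTheory

lemma aux_periodic_unif (α c : ℝ) (hα0 : 0 < α) (hc : 1 < c) (M : ℝ → ℝ)
    (hMcont : ∀ x > (0 : ℝ), ContinuousAt M x)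
    (hMper : ∀ x > (0 : ℝ), M (c ^ (1 / α) * x) = M x) :
    ∀ δ > (0 : ℝ), ∃ ρ : ℝ, 1/2 ≤ ρ ∧ ρ < 1 ∧
      ∀ u > (0 : ℝ), ∀ s : ℝ, ρ ≤ s → s ≤ 1 → |M (s * u) - M u| ≤ δ := by
  intro δ hδ
  have hc0 : (0:ℝ) < c := lt_trans one_pos hc
  have hq1 : 1 < c ^ (1/α) := by
    rw [Real.one_lt_rpow_iff_of_pos hc0]
    exact Or.inl ⟨hc, by positivity⟩
  set q : ℝ := c ^ (1/α) with hqdef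
  have hq0 : 0 < q := lt_trans one_pos hq1
  set p : ℝ := Real.log q with hpdef
  have hp0 : 0 < p := Real.log_pos hq1
  have hexp_p : Real.exp p = q := Real.exp_log hq0
  -- integer periodicity
  have hMz : ∀ n : ℤ, ∀ x > (0:ℝ), M (q ^ n * x) = M x := by
    intro n
    induction n using Int.induction_on with
    | zero => intro x hx; simp
    | succ k ih =>
      intro x hx
      have h1 : q ^ ((k:ℤ)+1) * x = q * (q ^ (k:ℤ) * x) := by
        rw [zpow_add_one₀ (ne_of_gt hq0)]; ring
      rw [h1, hMper (q ^ (k:ℤ) * x) (by positivity), ih x hx]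
    | pred k ih =>
      intro x hx
      have h2 := hMper (q ^ (-(k:ℤ)-1) * x) (by positivity)
      have h1 : q * (q ^ (-(k:ℤ)-1) * x) = q ^ (-(k:ℤ)) * x := by
        rw [show (-(k:ℤ)) = (-(k:ℤ)-1) + 1 by ring, zpow_add_one₀ (ne_of_gt hq0)]; ring
      rw [h1] at h2
      have h3 : M (q ^ (-(k:ℤ)-1) * x) = M x := by rw [← h2, ih x hx]
      exact h3
  -- uniform continuity on compact
  have hKc : IsCompact ((Icc (1/2:ℝ) 1) ×ˢ (Icc (0:ℝ) p)) := isCompact_Icc.prod isCompact_Icc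
  have hcont : ContinuousOn (fun z : ℝ × ℝ => M (z.1 * Real.exp z.2))
      ((Icc (1/2:ℝ) 1) ×ˢ (Icc (0:ℝ) p)) := by
    intro z hz
    have hz1 : (0:ℝ) < z.1 := lt_of_lt_of_le (by norm_num) hz.1.1
    have hca : ContinuousAt (fun z : ℝ × ℝ => M (z.1 * Real.exp z.2)) z := by
      have harg : ContinuousAt (fun z : ℝ × ℝ => z.1 * Real.exp z.2) z :=
        (continuous_fst.mul (Real.continuous_exp.comp continuous_snd)).continuousAt
      exact (hMcont _ (by positivity)).comp harg
    exact hca.continuousWithinAt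
  have huc := hKc.uniformContinuousOn_of_continuous hcont
  rw [Metric.uniformContinuousOn_iff] at huc
  obtain ⟨η, hη0, hucd⟩ := huc δ hδ
  set η' : ℝ := min η (1/2) with hη'def
  have hη'0 : 0 < η' := lt_min hη0 (by norm_num)
  have hη'half : η' ≤ 1/2 := min_le_right _ _
  refine ⟨1 - η'/2, by linarith, by linarith, ?_⟩
  intro u hu s hρs hs1
  -- decompose u = q^n * exp t
  set n : ℤ := ⌊Real.log u / p⌋ with hndef
  set t : ℝ := Real.log u - n * p with htdef
  have ht0 : 0 ≤ t := Int.sub_floor_div_mul_nonneg (Real.log u) hp0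
  have htp : t < p := Int.sub_floor_div_mul_lt (Real.log u) hp0
  have hu_eq : u = q ^ n * Real.exp t := by
    have : Real.exp (Real.log u) = Real.exp ((n:ℝ) * p + t) := by
      congr 1; rw [htdef]; ring
    rw [Real.exp_log hu] at this
    rw [this, Real.exp_add, mul_comm ((n:ℤ):ℝ) p, Real.exp_mul, Real.rpow_intCast, hexp_p]
  have hst : (0:ℝ) < s := by linarith
  have hMu : M u = M (Real.exp t) := by
    rw [hu_eq, hMz n _ (Real.exp_pos t)]
  have hMsu : M (s * u) = M (s * Real.exp t) := by
    have : s * u = q ^ n * (s * Real.exp t) := by rw [hu_eq]; ring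
    rw [this, hMz n _ (by positivity)]
  have hmem1 : ((s, t) : ℝ × ℝ) ∈ (Icc (1/2:ℝ) 1) ×ˢ (Icc (0:ℝ) p) := by
    constructor
    · constructor <;> simp only [] <;> [linarith; exact hs1]
    · exact ⟨ht0, le_of_lt htp⟩
  have hmem2 : ((1, t) : ℝ × ℝ) ∈ (Icc (1/2:ℝ) 1) ×ˢ (Icc (0:ℝ) p) := by
    refine ⟨⟨by norm_num, le_refl 1⟩, ht0, le_of_lt htp⟩
  have hdist : dist ((s, t) : ℝ × ℝ) ((1, t) : ℝ × ℝ) < η := by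
    rw [Prod.dist_eq]
    simp only [dist_self]
    have : dist s 1 = 1 - s := by rw [Real.dist_eq, abs_of_nonpos (by linarith)]; ring
    rw [this]
    have h1 : 1 - s ≤ η'/2 := by linarith
    have h2 : η'/2 < η := by
      have := min_le_left η (1/2)
      calc η'/2 < η' := by linarith
        _ ≤ η := min_le_left _ _
    calc max (1 - s) 0 ≤ 1 - s := by
          apply max_le (le_refl _) (by linarith)
      _ < η := lt_of_le_of_lt h1 h2
  have := hucd (s, t) hmem1 (1, t) hmem2 hdist
  simp only [one_mul] at this
  rw [Real.dist_eq] at this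
  rw [hMsu, hMu]
  exact le_of_lt this


set_option maxHeartbeats 1000000 in
/-- uniform subexponentiality. Let `ν_lam` be the probability measure
on `[1,∞)` with distribution function `1 − x^{−α} M(x·lam^{1/α})/M(lam^{1/α})`. Then
`lim_{x→∞} sup_{lam∈[c⁻¹,1]} | (ν_lam ∗ ν_lam)((x,∞)) / ν_lam((x,∞)) − 2 | = 0`. -/
theorem stmt_8 (α c : ℝ) (hα0 : 0 < α) (hα1 : α < 1) (hc : 1 < c)
    -- the continuous logarithmically periodic function M
    (M : ℝ → ℝ)
    (hMcont : ∀ x > (0 : ℝ), ContinuousAt M x)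
    (hMpos : ∀ x > (0 : ℝ), 0 < M x)
    (hMbdd : ∃ K : ℝ, ∀ x > (0 : ℝ), M x ≤ K)
    (hMlow : ∃ m > (0 : ℝ), ∀ x > (0 : ℝ), m ≤ M x)
    (hMper : ∀ x > (0 : ℝ), M (c ^ (1 / α) * x) = M x)
    (hMmono : ∀ x y : ℝ, 0 < x → x ≤ y → M y * y ^ (-α) ≤ M x * x ^ (-α))
    -- the probability measures ν_lam on [1,∞)
    (ν : ℝ → Measure ℝ)
    (hνprob : ∀ lam ∈ Set.Icc c⁻¹ (1 : ℝ), IsProbabilityMeasure (ν lam))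
    (hνsupp : ∀ lam ∈ Set.Icc c⁻¹ (1 : ℝ), ν lam (Set.Iio 1) = 0)
    (hνdf : ∀ lam ∈ Set.Icc c⁻¹ (1 : ℝ), ∀ x ≥ (1 : ℝ),
      (ν lam (Set.Iic x)).toReal = 1 - x ^ (-α) * M (x * lam ^ (1 / α)) / M (lam ^ (1 / α))) :
    ∀ ε > (0 : ℝ), ∃ X : ℝ, ∀ x ≥ X, ∀ lam ∈ Set.Icc c⁻¹ (1 : ℝ),
      |((ν lam).conv (ν lam) (Set.Ioi x)).toReal / (ν lam (Set.Ioi x)).toReal - 2| < ε := by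
  intro ε hε
  obtain ⟨K, hK⟩ := hMbdd
  obtain ⟨m, hm0, hm⟩ := hMlow
  have hmK : m ≤ K := le_trans (hm 1 one_pos) (hK 1 one_pos)
  have hK0 : 0 < K := lt_of_lt_of_le hm0 hmK
  have hc0 : (0:ℝ) < c := lt_trans one_pos hc
  have hcinv0 : (0:ℝ) < c⁻¹ := inv_pos.mpr hc0
  set R : ℝ := K / m with hRdef
  have hR1 : 1 ≤ R := (one_le_div hm0).mpr hmK
  have hR0 : 0 < R := lt_of_lt_of_le one_pos hR1
  set F : ℝ → ℝ → ℝ := fun lam x => x ^ (-α) * M (x * lam ^ (1/α)) / M (lam ^ (1/α)) with hFdef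
  have hlamp : ∀ lam ∈ Set.Icc c⁻¹ (1:ℝ), 0 < lam := fun lam hl => lt_of_lt_of_le hcinv0 hl.1
  have hLp : ∀ lam ∈ Set.Icc c⁻¹ (1:ℝ), 0 < lam ^ (1/α) :=
    fun lam hl => Real.rpow_pos_of_pos (hlamp lam hl) _
  -- positivity of F
  have hFpos : ∀ lam ∈ Set.Icc c⁻¹ (1:ℝ), ∀ x : ℝ, 0 < x → 0 < F lam x := by
    intro lam hl x hx
    have hL := hLp lam hl
    have h1 : 0 < x * lam ^ (1/α) := by positivity
    have := hMpos _ h1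
    have h2 := hMpos _ hL
    have h3 : (0:ℝ) < x ^ (-α) := Real.rpow_pos_of_pos hx _
    simp only [hFdef]
    positivity
  -- upper bound for F
  have hFub : ∀ lam ∈ Set.Icc c⁻¹ (1:ℝ), ∀ x : ℝ, 0 < x → F lam x ≤ R * x ^ (-α) := by
    intro lam hl x hx
    have hL := hLp lam hl
    have h1 : 0 < x * lam ^ (1/α) := by positivity
    have h3 : (0:ℝ) < x ^ (-α) := Real.rpow_pos_of_pos hx _
    have hdiv : M (x * lam ^ (1/α)) / M (lam ^ (1/α)) ≤ K / m :=
      div_le_div₀ hK0.le (hK _ h1) hm0 (hm _ hL)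
    have : x ^ (-α) * (M (x * lam ^ (1/α)) / M (lam ^ (1/α))) ≤ x ^ (-α) * (K/m) :=
      mul_le_mul_of_nonneg_left hdiv h3.le
    calc F lam x = x ^ (-α) * (M (x * lam ^ (1/α)) / M (lam ^ (1/α))) := by
          simp only [hFdef]; ring
      _ ≤ x ^ (-α) * (K/m) := this
      _ = R * x ^ (-α) := by rw [hRdef]; ring
  -- lower bound for F : x^(-α) ≤ R * F lam x
  have hFlb : ∀ lam ∈ Set.Icc c⁻¹ (1:ℝ), ∀ x : ℝ, 0 < x → x ^ (-α) ≤ R * F lam x := by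
    intro lam hl x hx
    have hL := hLp lam hl
    have h1 : 0 < x * lam ^ (1/α) := by positivity
    have h3 : (0:ℝ) < x ^ (-α) := Real.rpow_pos_of_pos hx _
    have hdiv : m / K ≤ M (x * lam ^ (1/α)) / M (lam ^ (1/α)) :=
      div_le_div₀ (hMpos _ h1).le (hm _ h1) (hMpos _ hL) (hK _ hL)
    have h4 : x ^ (-α) * (m/K) ≤ x ^ (-α) * (M (x * lam ^ (1/α)) / M (lam ^ (1/α))) :=
      mul_le_mul_of_nonneg_left hdiv h3.le
    have h5 : R * (x ^ (-α) * (m/K)) = x ^ (-α) := by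
      rw [hRdef]; field_simp
    calc x ^ (-α) = R * (x ^ (-α) * (m/K)) := h5.symm
      _ ≤ R * (x ^ (-α) * (M (x * lam ^ (1/α)) / M (lam ^ (1/α)))) := by
          apply mul_le_mul_of_nonneg_left h4 hR0.le
      _ = R * F lam x := by simp only [hFdef]; ring
  -- antitonicity of F
  have hFmono : ∀ lam ∈ Set.Icc c⁻¹ (1:ℝ), ∀ x y : ℝ, 0 < x → x ≤ y → F lam y ≤ F lam x := by
    intro lam hl x y hx hxy
    have hL := hLp lam hl
    have hy : 0 < y := lt_of_lt_of_le hx hxy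
    have h0 := hMmono (x * lam ^ (1/α)) (y * lam ^ (1/α)) (by positivity)
      (mul_le_mul_of_nonneg_right hxy hL.le)
    rw [Real.mul_rpow hy.le hL.le, Real.mul_rpow hx.le hL.le] at h0
    have hLa : (0:ℝ) < (lam ^ (1/α)) ^ (-α) := Real.rpow_pos_of_pos hL _
    rw [← mul_assoc, ← mul_assoc] at h0
    have h1 : M (y * lam ^ (1/α)) * y ^ (-α) ≤ M (x * lam ^ (1/α)) * x ^ (-α) :=
      (mul_le_mul_iff_of_pos_right hLa).mp h0
    have h2 : y ^ (-α) * M (y * lam ^ (1/α)) ≤ x ^ (-α) * M (x * lam ^ (1/α)) := by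
      rw [mul_comm, mul_comm (x ^ (-α))]; exact h1
    simp only [hFdef]
    exact (div_le_div_iff_of_pos_right (hMpos _ hL)).mpr h2
  -- tail formula
  have htailR : ∀ lam ∈ Set.Icc c⁻¹ (1:ℝ), ∀ x : ℝ, 1 ≤ x →
      (ν lam (Set.Ioi x)).toReal = F lam x := by
    intro lam hl x hx
    haveI := hνprob lam hl
    have hcompl : ν lam (Set.Ioi x) = 1 - ν lam (Set.Iic x) := by
      rw [← Set.compl_Iic, measure_compl measurableSet_Iic (measure_ne_top _ _), measure_univ]
    rw [hcompl, ENNReal.toReal_sub_of_le prob_le_one ENNReal.one_ne_top]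
    rw [hνdf lam hl x hx]
    simp only [hFdef, ENNReal.toReal_one]
    ring
  have htail : ∀ lam ∈ Set.Icc c⁻¹ (1:ℝ), ∀ x : ℝ, 1 ≤ x →
      ν lam (Set.Ioi x) = ENNReal.ofReal (F lam x) := by
    intro lam hl x hx
    haveI := hνprob lam hl
    rw [← htailR lam hl x hx, ENNReal.ofReal_toReal (measure_ne_top _ _)]
  have hIci : ∀ lam ∈ Set.Icc c⁻¹ (1:ℝ), ν lam (Set.Ici 1) = 1 := by
    intro lam hl
    haveI := hνprob lam hl
    rw [← Set.compl_Iio, measure_compl measurableSet_Iio (measure_ne_top _ _), measure_univ,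
      hνsupp lam hl, tsub_zero]
  have hconv_pre : ∀ lam ∈ Set.Icc c⁻¹ (1:ℝ), ∀ x : ℝ,
      (ν lam).conv (ν lam) (Set.Ioi x) =
        ((ν lam).prod (ν lam)) {p : ℝ × ℝ | x < p.1 + p.2} := by
    intro lam hl x
    haveI := hνprob lam hl
    rw [Measure.conv, Measure.map_apply measurable_add measurableSet_Ioi]
    congr 1
  -- quantitative setup
  set δ1 : ℝ := min (ε/32) 1 with hδ1def
  have hδ10 : 0 < δ1 := lt_min (by linarith) one_pos
  have hδ1ε : δ1 ≤ ε/32 := min_le_left _ _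
  have hδ11 : δ1 ≤ 1 := min_le_right _ _
  obtain ⟨ρ, hρhalf, hρ1, hρ⟩ := aux_periodic_unif α c hα0 hc M hMcont hMper (δ1 * m)
    (by positivity)
  set r : ℝ := max ρ ((1+δ1) ^ (-(1/α))) with hrdef
  have hr1 : r < 1 := by
    apply max_lt hρ1
    apply Real.rpow_lt_one_of_one_lt_of_neg (by linarith)
    rw [neg_lt, neg_zero]; positivity
  have hrρ : ρ ≤ r := le_max_left _ _
  have hr0 : 0 < r := lt_of_lt_of_le (by linarith : (0:ℝ) < ρ) hrρ
  set A : ℝ := max 1 ((8 * R^3 * 2 ^ α / ε) ^ (1/α)) with hAdef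
  have hA1 : 1 ≤ A := le_max_left _ _
  have hA0 : 0 < A := lt_of_lt_of_le one_pos hA1
  have hAbound : 2 * R^3 * 2^α * A ^ (-α) ≤ ε/4 := by
    have hB0 : (0:ℝ) < 8 * R^3 * 2 ^ α / ε := by positivity
    have h1 : (8 * R^3 * 2 ^ α / ε) ^ (1/α) ≤ A := le_max_right _ _
    have h2 : A ^ (-α) ≤ ((8 * R^3 * 2 ^ α / ε) ^ (1/α)) ^ (-α) :=
      Real.rpow_le_rpow_of_nonpos (Real.rpow_pos_of_pos hB0 _) h1 (by linarith)
    have h3 : ((8 * R^3 * 2 ^ α / ε) ^ (1/α)) ^ (-α) = (8 * R^3 * 2 ^ α / ε)⁻¹ := by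
      rw [← Real.rpow_mul hB0.le]
      rw [show (1/α) * (-α) = -1 by field_simp]
      exact Real.rpow_neg_one _
    rw [h3] at h2
    calc 2 * R^3 * 2^α * A ^ (-α) ≤ 2 * R^3 * 2^α * (8 * R^3 * 2 ^ α / ε)⁻¹ := by
          apply mul_le_mul_of_nonneg_left h2 (by positivity)
      _ = ε/4 := by field_simp; ring
  set X : ℝ := max (max (A / (1 - r)) (2*A + 2))
      (max ((R^3 * 2^(2*α) * (8/ε)) ^ (1/α)) ((R*(2/ε)) ^ (1/α))) with hXdef
  refine ⟨X, ?_⟩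
  intro x hx lam hl
  haveI := hνprob lam hl
  have hxA2 : 2*A + 2 ≤ x := le_trans (le_trans (le_max_right _ _) (le_max_left _ _)) hx
  have hx2 : (2:ℝ) ≤ x := by linarith
  have hx0 : (0:ℝ) < x := by linarith
  have hx1 : (1:ℝ) ≤ x := by linarith
  have hxr : A / (1 - r) ≤ x := le_trans (le_trans (le_max_left _ _) (le_max_left _ _)) hx
  have hxc : x ^ (-α) ≤ ε / (8 * R^3 * 2^(2*α)) := by
    have h1 : (R^3 * 2^(2*α) * (8/ε)) ^ (1/α) ≤ x :=
      le_trans (le_trans (le_max_left _ _) (le_max_right _ _)) hx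
    have hB0 : (0:ℝ) < R^3 * 2^(2*α) * (8/ε) := by positivity
    have h2 : x ^ (-α) ≤ ((R^3 * 2^(2*α) * (8/ε)) ^ (1/α)) ^ (-α) :=
      Real.rpow_le_rpow_of_nonpos (Real.rpow_pos_of_pos hB0 _) h1 (by linarith)
    have h3 : ((R^3 * 2^(2*α) * (8/ε)) ^ (1/α)) ^ (-α) = (R^3 * 2^(2*α) * (8/ε))⁻¹ := by
      rw [← Real.rpow_mul hB0.le, show (1/α) * (-α) = -1 by field_simp]
      exact Real.rpow_neg_one _
    rw [h3] at h2
    calc x ^ (-α) ≤ (R^3 * 2^(2*α) * (8/ε))⁻¹ := h2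
      _ = ε / (8 * R^3 * 2^(2*α)) := by
          rw [show R^3 * 2^(2*α) * (8/ε) = (8 * R^3 * 2^(2*α)) / ε by ring, inv_div]
  have hxd : R * x ^ (-α) ≤ ε/2 := by
    have h1 : (R*(2/ε)) ^ (1/α) ≤ x :=
      le_trans (le_trans (le_max_right _ _) (le_max_right _ _)) hx
    have hB0 : (0:ℝ) < R*(2/ε) := by positivity
    have h2 : x ^ (-α) ≤ ((R*(2/ε)) ^ (1/α)) ^ (-α) :=
      Real.rpow_le_rpow_of_nonpos (Real.rpow_pos_of_pos hB0 _) h1 (by linarith)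
    have h3 : ((R*(2/ε)) ^ (1/α)) ^ (-α) = (R*(2/ε))⁻¹ := by
      rw [← Real.rpow_mul hB0.le, show (1/α) * (-α) = -1 by field_simp]
      exact Real.rpow_neg_one _
    rw [h3] at h2
    calc R * x ^ (-α) ≤ R * (R*(2/ε))⁻¹ := mul_le_mul_of_nonneg_left h2 hR0.le
      _ ≤ ε/2 := by
          rw [mul_inv, ← mul_assoc, mul_inv_cancel₀ (ne_of_gt hR0), one_mul, inv_div]
  -- basic notation
  set Fx : ℝ := F lam x with hFxdef
  have hFx0 : 0 < Fx := hFpos lam hl x hx0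
  have hFxs : Fx ≤ ε/2 := le_trans (hFub lam hl x hx0) hxd
  set CV : ENNReal := (ν lam).conv (ν lam) (Set.Ioi x) with hCVdef
  have hCVne : CV ≠ ⊤ := by
    rw [hCVdef]
    exact measure_ne_top _ _
  set G : Measure (ℝ × ℝ) := (ν lam).prod (ν lam) with hGdef
  have hq := htail lam hl x hx1
  -- lower bound
  have hlow : 2 * Fx ≤ CV.toReal + Fx * Fx := by
    have hsub : (Set.Ioi x ×ˢ Set.Ici 1) ∪ (Set.Ici 1 ×ˢ Set.Ioi x) ⊆
        {p : ℝ × ℝ | x < p.1 + p.2} := by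
      rintro ⟨p1, p2⟩ hp
      rcases hp with ⟨h1, h2⟩ | ⟨h1, h2⟩ <;>
        simp only [Set.mem_Ioi, Set.mem_Ici] at h1 h2 <;>
        simp only [Set.mem_setOf_eq] <;> linarith
    have hinter : (Set.Ioi x ×ˢ Set.Ici 1) ∩ (Set.Ici 1 ×ˢ Set.Ioi x) =
        Set.Ioi x ×ˢ Set.Ioi x := by
      rw [Set.prod_inter_prod]
      congr 1
      · exact Set.inter_eq_left.mpr (fun y hy => le_trans hx1 (le_of_lt hy))
      · exact Set.inter_eq_right.mpr (fun y hy => le_trans hx1 (le_of_lt hy))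
    have hkey := measure_union_add_inter (μ := G) (t := Set.Ici 1 ×ˢ Set.Ioi x)
      (Set.Ioi x ×ˢ Set.Ici 1) (measurableSet_Ici.prod measurableSet_Ioi)
    rw [hinter] at hkey
    have hGA : G (Set.Ioi x ×ˢ Set.Ici 1) = ENNReal.ofReal Fx := by
      rw [hGdef, Measure.prod_prod, hIci lam hl, mul_one, hq]
    have hGB : G (Set.Ici 1 ×ˢ Set.Ioi x) = ENNReal.ofReal Fx := by
      rw [hGdef, Measure.prod_prod, hIci lam hl, one_mul, hq]
    have hGAB : G (Set.Ioi x ×ˢ Set.Ioi x) = ENNReal.ofReal Fx * ENNReal.ofReal Fx := by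
      rw [hGdef, Measure.prod_prod, hq]
    have hmono : G ((Set.Ioi x ×ˢ Set.Ici 1) ∪ (Set.Ici 1 ×ˢ Set.Ioi x)) ≤ CV := by
      rw [hCVdef, hconv_pre lam hl x]
      exact measure_mono hsub
    rw [hGA, hGB] at hkey
    have h2 : ENNReal.ofReal Fx + ENNReal.ofReal Fx ≤
        CV + ENNReal.ofReal Fx * ENNReal.ofReal Fx := by
      calc ENNReal.ofReal Fx + ENNReal.ofReal Fx
          = G ((Set.Ioi x ×ˢ Set.Ici 1) ∪ (Set.Ici 1 ×ˢ Set.Ioi x))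
            + G (Set.Ioi x ×ˢ Set.Ioi x) := hkey.symm
        _ ≤ CV + ENNReal.ofReal Fx * ENNReal.ofReal Fx := add_le_add hmono (le_of_eq hGAB)
    have hne : CV + ENNReal.ofReal Fx * ENNReal.ofReal Fx ≠ ⊤ :=
      ENNReal.add_ne_top.mpr ⟨hCVne, ENNReal.mul_ne_top ENNReal.ofReal_ne_top ENNReal.ofReal_ne_top⟩
    have h3 := ENNReal.toReal_mono hne h2
    rw [ENNReal.toReal_add ENNReal.ofReal_ne_top ENNReal.ofReal_ne_top,
      ENNReal.toReal_add hCVne (ENNReal.mul_ne_top ENNReal.ofReal_ne_top ENNReal.ofReal_ne_top),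
      ENNReal.toReal_mul, ENNReal.toReal_ofReal hFx0.le] at h3
    linarith
  -- geometry for the upper bound
  have hxA : A ≤ x/2 := by linarith
  have hxA1 : (1:ℝ) ≤ x - A := by linarith
  have hx21 : (1:ℝ) ≤ x/2 := by linarith
  -- long-tail estimate
  have hlt : F lam (x - A) ≤ (1 + ε/8) * Fx := by
    have hL := hLp lam hl
    have hML := hMpos _ hL
    set s : ℝ := (x - A)/x with hsdef
    have hs1 : s ≤ 1 := by
      rw [hsdef, div_le_one hx0]; linarith
    have hsr : r ≤ s := by
      rw [hsdef, le_div_iff₀ hx0]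
      have h9 : A ≤ (1 - r) * x := by
        rw [div_le_iff₀ (by linarith : (0:ℝ) < 1 - r)] at hxr; linarith
      linarith
    have hs0 : 0 < s := lt_of_lt_of_le hr0 hsr
    have hsu : s * (x * lam ^ (1/α)) = (x - A) * lam ^ (1/α) := by
      rw [hsdef]; field_simp
    have hMr : M ((x - A) * lam ^ (1/α)) ≤ (1 + δ1) * M (x * lam ^ (1/α)) := by
      have h1 := hρ (x * lam ^ (1/α)) (by positivity) s (le_trans hrρ hsr) hs1
      rw [hsu] at h1
      have h2 := (abs_le.mp h1).2
      have h3 := hm (x * lam ^ (1/α)) (by positivity)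
      linarith [mul_le_mul_of_nonneg_left h3 hδ10.le, h2]
    have hsp : (x - A) ^ (-α) ≤ (1 + δ1) * x ^ (-α) := by
      have hxa : x - A = s * x := by rw [hsdef]; field_simp
      have h4 : s ^ (-α) ≤ 1 + δ1 := by
        have h5 : (1+δ1) ^ (-(1/α)) ≤ s := le_trans (le_max_right _ _) hsr
        have h6 : s ^ (-α) ≤ ((1+δ1) ^ (-(1/α))) ^ (-α) :=
          Real.rpow_le_rpow_of_nonpos (Real.rpow_pos_of_pos (by linarith) _) h5
            (by linarith)
        rwa [← Real.rpow_mul (by linarith : (0:ℝ) ≤ 1 + δ1),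
          show (-(1/α)) * (-α) = 1 by field_simp, Real.rpow_one] at h6
      rw [hxa, Real.mul_rpow hs0.le hx0.le]
      exact mul_le_mul_of_nonneg_right h4 (Real.rpow_pos_of_pos hx0 _).le
    have hnum : (x - A) ^ (-α) * M ((x - A) * lam ^ (1/α)) ≤
        ((1+δ1) * x ^ (-α)) * ((1 + δ1) * M (x * lam ^ (1/α))) :=
      mul_le_mul hsp hMr (hMpos _ (by positivity)).le (by positivity)
    have hrw : ((1+δ1)*(1+δ1)) * Fx =
        (((1+δ1) * x ^ (-α)) * ((1+δ1) * M (x * lam ^ (1/α)))) / M (lam ^ (1/α)) := by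
      rw [hFxdef]; simp only [hFdef]; ring
    have hd : F lam (x - A) ≤ ((1+δ1)*(1+δ1)) * Fx := by
      rw [hrw]
      simp only [hFdef]
      exact (div_le_div_iff_of_pos_right hML).mpr hnum
    have hd2 : ((1+δ1)*(1+δ1)) * Fx ≤ (1 + ε/8) * Fx := by
      have hsq : (1+δ1)*(1+δ1) ≤ 1 + ε/8 := by
        have hδδ : δ1*δ1 ≤ δ1*1 := mul_le_mul_of_nonneg_left hδ11 hδ10.le
        linarith [hδδ, hδ1ε]
      exact mul_le_mul_of_nonneg_right hsq hFx0.le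
    linarith
  -- upper bound for the convolution tail
  have hup2 : CV.toReal ≤ (2 + 5*ε/8) * Fx := by
    set T : Set (ℝ × ℝ) := {p : ℝ × ℝ | x < p.1 + p.2} with hT
    set Gs : Set (ℝ × ℝ) := Set.Ici 1 ×ˢ Set.Ici 1 with hGs
    set B2 : Set (ℝ × ℝ) := {p : ℝ × ℝ | p.1 ∈ Set.Icc 1 (x/2) ∧ x - p.1 < p.2} with hB2
    set B1 : Set (ℝ × ℝ) := {p : ℝ × ℝ | p.2 ∈ Set.Icc 1 (x/2) ∧ x - p.2 < p.1} with hB1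
    have hB2m : MeasurableSet B2 := by
      have he : B2 = (Prod.fst ⁻¹' Set.Icc 1 (x/2)) ∩ {p : ℝ × ℝ | x - p.1 < p.2} := rfl
      rw [he]
      exact (measurableSet_Icc.preimage measurable_fst).inter
        (measurableSet_lt (measurable_const.sub measurable_fst) measurable_snd)
    have hB1m : MeasurableSet B1 := by
      have he : B1 = (Prod.snd ⁻¹' Set.Icc 1 (x/2)) ∩ {p : ℝ × ℝ | x - p.2 < p.1} := rfl
      rw [he]
      exact (measurableSet_Icc.preimage measurable_snd).inter
        (measurableSet_lt (measurable_const.sub measurable_snd) measurable_fst)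
    have hGsc : G Gsᶜ = 0 := by
      have hsub2 : Gsᶜ ⊆ (Set.Iio 1 ×ˢ (Set.univ : Set ℝ)) ∪ ((Set.univ : Set ℝ) ×ˢ Set.Iio 1) := by
        intro p hp
        simp only [hGs, Set.mem_compl_iff, Set.mem_prod, Set.mem_Ici, not_and_or,
          not_le] at hp
        simp only [Set.mem_union, Set.mem_prod, Set.mem_Iio, Set.mem_univ, and_true,
          true_and]
        exact hp
      apply measure_mono_null hsub2
      apply measure_union_null
      · rw [hGdef, Measure.prod_prod, hνsupp lam hl, zero_mul]
      · rw [hGdef, Measure.prod_prod, hνsupp lam hl, mul_zero]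
    have hCVG : CV = G T := by rw [hCVdef, hconv_pre lam hl x]
    have hsplit : T ∩ Gs ⊆ (B1 ∪ B2) ∪ (Set.Ioi (x/2) ×ˢ Set.Ioi (x/2)) := by
      rintro ⟨p1, p2⟩ ⟨hpt, hp1, hp2⟩
      simp only [hT, Set.mem_setOf_eq] at hpt
      simp only [Set.mem_Ici] at hp1 hp2
      by_cases h1 : p1 ≤ x/2
      · exact Or.inl (Or.inr ⟨⟨hp1, h1⟩, by linarith⟩)
      · by_cases h2 : p2 ≤ x/2
        · exact Or.inl (Or.inl ⟨⟨hp2, h2⟩, by linarith⟩)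
        · exact Or.inr ⟨lt_of_not_ge h1, lt_of_not_ge h2⟩
    have hB2b : G B2 ≤ ENNReal.ofReal ((1 + ε/8) * Fx) +
        ENNReal.ofReal (R * (x/2) ^ (-α)) * ENNReal.ofReal (R * A ^ (-α)) := by
      rw [hGdef, Measure.prod_apply hB2m]
      have hpt : ∀ a : ℝ, ν lam (Prod.mk a ⁻¹' B2) ≤
          (Set.Icc 1 A).indicator (fun _ => ENNReal.ofReal ((1 + ε/8) * Fx)) a
          + (Set.Ioc A (x/2)).indicator (fun _ => ENNReal.ofReal (R * (x/2) ^ (-α))) a := by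
        intro a
        by_cases ha : a ∈ Set.Icc 1 (x/2)
        · have hslice : Prod.mk a ⁻¹' B2 = Set.Ioi (x - a) := by
            ext b
            simp only [hB2, Set.mem_preimage, Set.mem_setOf_eq, Set.mem_Ioi]
            exact ⟨fun h => h.2, fun h => ⟨ha, h⟩⟩
          rw [hslice]
          by_cases haA : a ≤ A
          · have hxa1 : (1:ℝ) ≤ x - a := by
              have := ha.1; linarith
            have h1 : ν lam (Set.Ioi (x - a)) = ENNReal.ofReal (F lam (x - a)) :=
              htail lam hl _ hxa1
            have h2 : F lam (x - a) ≤ F lam (x - A) :=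
              hFmono lam hl (x - A) (x - a) (by linarith) (by linarith [haA])
            rw [h1, Set.indicator_of_mem (show a ∈ Set.Icc 1 A from ⟨ha.1, haA⟩)]
            calc ENNReal.ofReal (F lam (x - a)) ≤ ENNReal.ofReal ((1 + ε/8) * Fx) :=
                  ENNReal.ofReal_le_ofReal (le_trans h2 hlt)
              _ ≤ _ := le_self_add
          · have hxa1 : (1:ℝ) ≤ x - a := by
              have := ha.2; linarith
            have hmem2 : a ∈ Set.Ioc A (x/2) := ⟨lt_of_not_ge haA, ha.2⟩
            have h1 : ν lam (Set.Ioi (x - a)) = ENNReal.ofReal (F lam (x - a)) :=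
              htail lam hl _ hxa1
            have h2 : F lam (x - a) ≤ F lam (x/2) :=
              hFmono lam hl (x/2) (x - a) (by linarith) (by linarith [ha.2])
            have h3 : F lam (x/2) ≤ R * (x/2) ^ (-α) := hFub lam hl _ (by linarith)
            rw [h1, Set.indicator_of_notMem (fun hmem : a ∈ Set.Icc 1 A => haA hmem.2),
              Set.indicator_of_mem hmem2, zero_add]
            exact ENNReal.ofReal_le_ofReal (le_trans h2 h3)
        · have hslice : Prod.mk a ⁻¹' B2 = ∅ := by
            ext b
            simp only [hB2, Set.mem_preimage, Set.mem_setOf_eq, Set.mem_empty_iff_false,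
              iff_false, not_and]
            intro hmem; exact absurd hmem ha
          rw [hslice]
          simp only [measure_empty]
          exact zero_le
      calc ∫⁻ a, ν lam (Prod.mk a ⁻¹' B2) ∂(ν lam)
          ≤ ∫⁻ a, ((Set.Icc 1 A).indicator (fun _ => ENNReal.ofReal ((1 + ε/8) * Fx)) a
            + (Set.Ioc A (x/2)).indicator (fun _ => ENNReal.ofReal (R * (x/2) ^ (-α))) a)
              ∂(ν lam) := lintegral_mono hpt
        _ = ENNReal.ofReal ((1 + ε/8) * Fx) * ν lam (Set.Icc 1 A)
            + ENNReal.ofReal (R * (x/2) ^ (-α)) * ν lam (Set.Ioc A (x/2)) := by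
            rw [lintegral_add_left (measurable_const.indicator measurableSet_Icc),
              lintegral_indicator_const measurableSet_Icc,
              lintegral_indicator_const measurableSet_Ioc]
        _ ≤ ENNReal.ofReal ((1 + ε/8) * Fx) * 1
            + ENNReal.ofReal (R * (x/2) ^ (-α)) * ENNReal.ofReal (R * A ^ (-α)) := by
            apply add_le_add
            · exact mul_le_mul_right prob_le_one _
            · apply mul_le_mul_right
              calc ν lam (Set.Ioc A (x/2)) ≤ ν lam (Set.Ioi A) :=
                    measure_mono Set.Ioc_subset_Ioi_self
                _ = ENNReal.ofReal (F lam A) := htail lam hl _ hA1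
                _ ≤ ENNReal.ofReal (R * A ^ (-α)) :=
                    ENNReal.ofReal_le_ofReal (hFub lam hl _ hA0)
        _ = _ := by rw [mul_one]
    have hB1b : G B1 = G B2 := by
      have hswap : Prod.swap ⁻¹' B1 = B2 := by
        ext p
        simp only [hB1, hB2, Set.mem_preimage, Set.mem_setOf_eq, Prod.fst_swap, Prod.snd_swap]
      calc G B1 = (Measure.map Prod.swap ((ν lam).prod (ν lam))) B1 := by
            rw [Measure.prod_swap]
        _ = ((ν lam).prod (ν lam)) (Prod.swap ⁻¹' B1) :=
            Measure.map_apply measurable_swap hB1m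
        _ = G B2 := by rw [hswap]
    have hB3b : G (Set.Ioi (x/2) ×ˢ Set.Ioi (x/2)) ≤
        ENNReal.ofReal (R * (x/2) ^ (-α)) * ENNReal.ofReal (R * (x/2) ^ (-α)) := by
      rw [hGdef, Measure.prod_prod, htail lam hl _ hx21]
      exact mul_le_mul' (ENNReal.ofReal_le_ofReal (hFub lam hl _ (by linarith)))
        (ENNReal.ofReal_le_ofReal (hFub lam hl _ (by linarith)))
    have htot : CV ≤ G B1 + G B2 + G (Set.Ioi (x/2) ×ˢ Set.Ioi (x/2)) := by
      rw [hCVG]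
      calc G T ≤ G (T ∩ Gs) + G (T \ Gs) := measure_le_inter_add_diff _ _ _
        _ = G (T ∩ Gs) := by
            rw [measure_mono_null (Set.diff_subset_compl _ _) hGsc, add_zero]
        _ ≤ G ((B1 ∪ B2) ∪ (Set.Ioi (x/2) ×ˢ Set.Ioi (x/2))) := measure_mono hsplit
        _ ≤ G (B1 ∪ B2) + G (Set.Ioi (x/2) ×ˢ Set.Ioi (x/2)) := measure_union_le _ _
        _ ≤ G B1 + G B2 + G (Set.Ioi (x/2) ×ˢ Set.Ioi (x/2)) :=
            add_le_add_left (measure_union_le _ _) _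
    have hCVle : CV ≤ ENNReal.ofReal (2 * ((1 + ε/8) * Fx + (R * (x/2) ^ (-α)) * (R * A ^ (-α)))
        + (R * (x/2) ^ (-α)) * (R * (x/2) ^ (-α))) := by
      have hx2a : (0:ℝ) ≤ R * (x/2) ^ (-α) := by positivity
      have hAa : (0:ℝ) ≤ R * A ^ (-α) := by positivity
      have hfx8 : (0:ℝ) ≤ (1 + ε/8) * Fx := by positivity
      calc CV ≤ G B1 + G B2 + G (Set.Ioi (x/2) ×ˢ Set.Ioi (x/2)) := htot
        _ ≤ (ENNReal.ofReal ((1 + ε/8) * Fx) +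
              ENNReal.ofReal (R * (x/2) ^ (-α)) * ENNReal.ofReal (R * A ^ (-α)))
            + (ENNReal.ofReal ((1 + ε/8) * Fx) +
              ENNReal.ofReal (R * (x/2) ^ (-α)) * ENNReal.ofReal (R * A ^ (-α)))
            + ENNReal.ofReal (R * (x/2) ^ (-α)) * ENNReal.ofReal (R * (x/2) ^ (-α)) := by
            apply add_le_add (add_le_add (le_trans (le_of_eq hB1b) hB2b) hB2b) hB3b
        _ = _ := by
            rw [← ENNReal.ofReal_mul hx2a, ← ENNReal.ofReal_mul hx2a,
              ← ENNReal.ofReal_add hfx8 (by positivity),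
              ← ENNReal.ofReal_add (by positivity) (by positivity),
              ← ENNReal.ofReal_add (by positivity) (by positivity)]
            congr 1
            ring
    have hCVr : CV.toReal ≤ 2 * ((1 + ε/8) * Fx + (R * (x/2) ^ (-α)) * (R * A ^ (-α)))
        + (R * (x/2) ^ (-α)) * (R * (x/2) ^ (-α)) :=
      ENNReal.toReal_le_of_le_ofReal (by positivity) hCVle
    -- numeric estimates
    have h2a : ((x/2:ℝ)) ^ (-α) = 2^α * x ^ (-α) := by
      have hxx : (x/2:ℝ) = x * 2⁻¹ := by ring
      rw [hxx, Real.mul_rpow hx0.le (by norm_num : (0:ℝ) ≤ 2⁻¹),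
        Real.inv_rpow (by norm_num : (0:ℝ) ≤ 2), Real.rpow_neg (by norm_num : (0:ℝ) ≤ 2),
        inv_inv]
      ring
    have h22 : (2:ℝ)^(2*α) = 2^α * 2^α := by
      rw [two_mul, Real.rpow_add two_pos]
    have hxR : x ^ (-α) ≤ R * Fx := hFlb lam hl x hx0
    have hxa0 : (0:ℝ) < x ^ (-α) := Real.rpow_pos_of_pos hx0 _
    have hp20 : (0:ℝ) < 2^α := Real.rpow_pos_of_pos two_pos _
    have hAa0 : (0:ℝ) < A ^ (-α) := Real.rpow_pos_of_pos hA0 _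
    have t2 : (R * (x/2) ^ (-α)) * (R * A ^ (-α)) ≤ (ε/8) * Fx := by
      have e1 : R^2 * 2^α * A ^ (-α) ≤ ε/(8*R) := by
        rw [le_div_iff₀ (by positivity)]
        linarith [hAbound]
      have e2 : (R * (x/2) ^ (-α)) * (R * A ^ (-α)) = (R^2 * 2^α * A ^ (-α)) * x ^ (-α) := by
        rw [h2a]; ring
      have e3 : (R^2 * 2^α * A ^ (-α)) * x ^ (-α) ≤ (ε/(8*R)) * (R * Fx) :=
        mul_le_mul e1 hxR hxa0.le (by positivity)
      have e4 : (ε/(8*R)) * (R * Fx) = (ε/8) * Fx := by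
        field_simp
      rw [e2]
      rw [e4] at e3
      exact e3
    have t3 : (R * (x/2) ^ (-α)) * (R * (x/2) ^ (-α)) ≤ (ε/8) * Fx := by
      have e4 : (R * (x/2) ^ (-α)) * (R * (x/2) ^ (-α))
          = (R^2 * 2^(2*α)) * (x ^ (-α) * x ^ (-α)) := by
        rw [h2a, h22]; ring
      have e5 : x ^ (-α) * x ^ (-α) ≤ (ε/(8*R^3*2^(2*α))) * (R * Fx) :=
        mul_le_mul hxc hxR hxa0.le (by positivity)
      have e6 : (R^2 * 2^(2*α)) * ((ε/(8*R^3*2^(2*α))) * (R * Fx)) = (ε/8) * Fx := by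
        field_simp
      calc (R * (x/2) ^ (-α)) * (R * (x/2) ^ (-α))
          = (R^2 * 2^(2*α)) * (x ^ (-α) * x ^ (-α)) := e4
        _ ≤ (R^2 * 2^(2*α)) * ((ε/(8*R^3*2^(2*α))) * (R * Fx)) := by
            apply mul_le_mul_of_nonneg_left e5 (by positivity)
        _ = (ε/8) * Fx := e6
    calc CV.toReal ≤ 2 * ((1 + ε/8) * Fx + (R * (x/2) ^ (-α)) * (R * A ^ (-α)))
          + (R * (x/2) ^ (-α)) * (R * (x/2) ^ (-α)) := hCVr
      _ ≤ 2 * ((1 + ε/8) * Fx + (ε/8) * Fx) + (ε/8) * Fx := by linarith [t2, t3]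
      _ = (2 + 5*ε/8) * Fx := by ring
  -- conclusion
  have hgoal : (ν lam (Set.Ioi x)).toReal = Fx := htailR lam hl x hx1
  rw [hgoal]
  rw [abs_lt]
  constructor
  · have h7 : (2 - ε/2) * Fx ≤ CV.toReal := by
      linarith [mul_le_mul_of_nonneg_right hFxs hFx0.le, hlow]
    have h8 : 2 - ε/2 ≤ CV.toReal / Fx := (le_div_iff₀ hFx0).mpr h7
    linarith
  · have h9 : CV.toReal / Fx ≤ 2 + 5*ε/8 := (div_le_iff₀ hFx0).mpr hup2
    linarith
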